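/- The alternating group Alt(7) is not strongly symmetric: there exist x, y ∈ Alt(7) with ⟨x, y⟩ = Alt(7) such that no automorphism φ of Alt(7) satisfies φ(x) = x⁻¹ and φ(y) = y⁻¹. -/

import Mathlib

open Equiv Equiv.Perm

/-- A pair `(x, y)` of elements of a group `G` is a *symmetric generating pair* if it
generates `G` and some automorphism of `G` inverts both `x` and `y`.  A group `G` is
*strongly symmetric* if it can be generated by two elements and every generating pair
is symmetric. -/
def StronglySymmetric (G : Type*) [Group G] : Prop :=
  (∃ x y : G, Subgroup.closure {x, y} = ⊤) ∧
    ∀ x y : G, Subgroup.closure {x, y} = ⊤ →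
      ∃ φ : MulAut G, φ x = x⁻¹ ∧ φ y = y⁻¹

/-- The 7-cycle `(0 1 2 3 4 5 6)`. -/
def xp : Perm (Fin 7) :=
  Equiv.mk (fun i => ![1,2,3,4,5,6,0] i) (fun i => ![6,0,1,2,3,4,5] i) (by decide) (by decide)

/-- The 3-cycle `(3 4 6)`. -/
def yp : Perm (Fin 7) :=
  Equiv.mk (fun i => ![0,1,2,4,6,5,3] i) (fun i => ![0,1,2,6,3,5,4] i) (by decide) (by decide)

/-- The four generators `xp, yp, xp⁻¹, yp⁻¹`. -/
def G4 : Fin 4 → Perm (Fin 7) := ![xp, yp, xp⁻¹, yp⁻¹]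

/-- Words in the generators expressing each of the 70 three-cycles of `Fin 7`. -/
def words : Fin 70 → List (Fin 4) := ![[1], [3], [0,1,2], [0,3,2], [2,1,0], [2,3,0], [0,0,1,2,2], [0,0,3,2,2], [1,0,1,2,3], [1,0,3,2,3], [1,2,1,0,3], [1,2,3,0,3], [2,2,1,0,0], [2,2,3,0,0], [3,0,1,2,1], [3,0,3,2,1], [3,2,1,0,1], [3,2,3,0,1], [0,0,0,1,2,2,2], [0,0,0,3,2,2,2], [0,0,3,0,1,0,3], [0,1,0,1,2,3,2], [0,1,0,3,0,0,3], [0,1,0,3,2,3,2], [0,1,2,1,0,3,2], [0,1,2,3,0,3,2], [0,3,0,0,3,0,1], [0,3,0,0,3,0,3], [0,3,0,1,0,3,0], [0,3,0,3,2,1,2], [0,3,2,1,0,1,2], [0,3,2,3,0,1,2], [1,0,0,1,2,2,3], [1,0,0,3,2,2,3], [1,2,2,1,0,0,3], [1,2,2,1,2,3,2], [1,2,2,3,0,0,3], [1,2,3,2,1,2,2], [2,1,0,1,2,3,0], [2,1,0,3,2,3,0], [2,1,2,1,0,3,0], [2,1,2,3,2,1,2], [2,2,2,1,0,0,0], [2,2,2,3,0,0,0],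 [2,3,0,1,2,1,0], [2,3,0,3,2,1,0], [2,3,2,1,0,1,0], [2,3,2,1,2,2,1], [2,3,2,3,0,1,0], [3,0,0,3,0,1,0], [3,2,2,1,0,0,1], [3,2,2,3,0,0,1], [0,1,2,3,0,3,2,1], [0,3,2,1,0,1,2,3], [0,3,2,3,0,1,2,1], [1,0,3,2,3,0,1,2], [1,2,3,0,3,2,1,0], [2,1,0,1,2,3,0,3], [2,3,0,1,2,1,0,3], [2,3,0,3,2,1,0,1], [3,0,3,2,1,0,1,2], [3,2,3,0,1,2,1,0], [0,0,1,0,1,2,3,2,2], [0,0,1,0,3,2,3,2,2], [0,0,3,2,1,0,1,2,2], [0,0,3,2,3,0,1,2,2], [0,1,2,1,0,0,1,2,1], [0,3,2,2,3,0,3,2,3], [2,1,2,2,1,0,0,3,0], [2,1,2,2,3,0,0,3,0]]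

/-- The value of the `p`-th word. -/
def val (p : Fin 70) : Perm (Fin 7) := ((words p).map G4).prod

set_option maxRecDepth 40000 in
theorem swap_in : ∀ a b c : Fin 7, a ≠ b → b ≠ c → a ≠ c →
    ∃ p : Fin 70, swap a b * swap b c = val p := by decide

theorem val_mem (p : Fin 70) : val p ∈ Subgroup.closure ({xp, yp} : Set (Perm (Fin 7))) := by
  have hx : xp ∈ Subgroup.closure ({xp, yp} : Set (Perm (Fin 7))) :=
    Subgroup.subset_closure (Set.mem_insert _ _)
  have hy : yp ∈ Subgroup.closure ({xp, yp} : Set (Perm (Fin 7))) :=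
    Subgroup.subset_closure (Set.mem_insert_of_mem _ rfl)
  refine Subgroup.list_prod_mem _ ?_
  intro g hg
  rw [List.mem_map] at hg
  obtain ⟨i, -, rfl⟩ := hg
  fin_cases i
  · exact hx
  · exact hy
  · exact inv_mem hx
  · exact inv_mem hy

/-- Every three-cycle has the form `swap a b * swap b c`. -/
theorem threeCycle_eq_swap_mul_swap {σ : Perm (Fin 7)} (ht : σ.IsThreeCycle) :
    ∃ a b c : Fin 7, a ≠ b ∧ b ≠ c ∧ a ≠ c ∧ σ = swap a b * swap b c := by
  obtain ⟨a, ha, -⟩ := ht.isCycle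
  have h3 : σ ^ 3 = 1 := by rw [← ht.orderOf]; exact pow_orderOf_eq_one σ
  have hcube : ∀ t : Fin 7, σ (σ (σ t)) = t := by
    intro t
    have := Equiv.ext_iff.mp h3 t
    simpa [pow_succ, Perm.mul_apply] using this
  refine ⟨a, σ a, σ (σ a), fun h => ha h.symm,
    fun h => ha (σ.injective h).symm, fun h => ?_, ?_⟩
  · exact ha ((congrArg σ h).trans (hcube a))
  · have hab : a ≠ σ a := fun h => ha h.symm
    have hbc : σ a ≠ σ (σ a) := fun h => ha (σ.injective h).symm
    have hac : a ≠ σ (σ a) := fun h => ha ((congrArg σ h).trans (hcube a))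
    have hsub : ({a, σ a, σ (σ a)} : Finset (Fin 7)) ⊆ σ.support := by
      intro t htm
      simp only [Finset.mem_insert, Finset.mem_singleton] at htm
      rcases htm with rfl | rfl | rfl <;> rw [Equiv.Perm.mem_support]
      · exact fun h => ha h
      · exact fun h => hbc h.symm
      · rw [hcube a]; exact hac
    have hcard : ({a, σ a, σ (σ a)} : Finset (Fin 7)).card = 3 := by
      rw [Finset.card_insert_of_notMem (by simp [hab, hac]),
        Finset.card_insert_of_notMem (by simp [hbc]), Finset.card_singleton]
    have hsupp : σ.support = ({a, σ a, σ (σ a)} : Finset (Fin 7)) :=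
      (Finset.eq_of_subset_of_card_le hsub (by rw [ht.card_support, hcard])).symm
    ext t
    rcases eq_or_ne t a with rfl | hta
    · rw [Perm.mul_apply, swap_apply_of_ne_of_ne hab hac, swap_apply_left]
    rcases eq_or_ne t (σ a) with rfl | htb
    · rw [Perm.mul_apply, swap_apply_left,
        swap_apply_of_ne_of_ne (fun h => hac h.symm) (fun h => hbc h.symm)]
    rcases eq_or_ne t (σ (σ a)) with rfl | htc
    · rw [Perm.mul_apply, swap_apply_right, swap_apply_right, hcube a]
    · have hfix : σ t = t := by
        rw [← Equiv.Perm.notMem_support, hsupp]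
        simp [hta, htb, htc]
      rw [hfix, Perm.mul_apply, swap_apply_of_ne_of_ne htb htc,
        swap_apply_of_ne_of_ne hta htb]

theorem closure_xp_yp : Subgroup.closure ({xp, yp} : Set (Perm (Fin 7))) =
    alternatingGroup (Fin 7) := by
  apply le_antisymm
  · rw [Subgroup.closure_le]
    intro g hg
    rcases hg with rfl | hg
    · rw [SetLike.mem_coe, Equiv.Perm.mem_alternatingGroup]; decide
    · rw [Set.mem_singleton_iff] at hg
      subst hg
      rw [SetLike.mem_coe, Equiv.Perm.mem_alternatingGroup]; decide
  · rw [← Equiv.Perm.closure_three_cycles_eq_alternating, Subgroup.closure_le]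
    intro σ hσ
    obtain ⟨a, b, c, hab, hbc, hac, rfl⟩ := threeCycle_eq_swap_mul_swap hσ
    obtain ⟨p, hp⟩ := swap_in a b c hab hbc hac
    rw [hp]
    exact val_mem p

/-- `xp` as an element of the alternating group. -/
def xa : alternatingGroup (Fin 7) :=
  ⟨xp, by rw [Equiv.Perm.mem_alternatingGroup]; decide⟩

/-- `yp` as an element of the alternating group. -/
def ya : alternatingGroup (Fin 7) :=
  ⟨yp, by rw [Equiv.Perm.mem_alternatingGroup]; decide⟩

theorem closure_xa_ya : Subgroup.closure ({xa, ya} : Set (alternatingGroup (Fin 7))) = ⊤ := by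
  apply Subgroup.map_injective (alternatingGroup (Fin 7)).subtype_injective
  rw [MonoidHom.map_closure, Set.image_pair]
  have h1 : (alternatingGroup (Fin 7)).subtype xa = xp := rfl
  have h2 : (alternatingGroup (Fin 7)).subtype ya = yp := rfl
  rw [h1, h2, closure_xp_yp, ← MonoidHom.range_eq_map]
  exact (Subgroup.range_subtype _).symm

theorem key1 : (xp * xp * yp * xp * yp * yp) ^ 4 = 1 := by decide

theorem key2 : (xp⁻¹ * xp⁻¹ * yp⁻¹ * xp⁻¹ * yp⁻¹ * yp⁻¹) ^ 4 ≠ 1 := by decide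

theorem no_inverting_aut :
    ¬∃ φ : MulAut (alternatingGroup (Fin 7)), φ xa = xa⁻¹ ∧ φ ya = ya⁻¹ := by
  rintro ⟨φ, hx, hy⟩
  have e1 : ((xa * xa * ya * xa * ya * ya) ^ 4) = 1 := by
    apply Subtype.ext
    simp only [SubmonoidClass.coe_pow, Subgroup.coe_mul, OneMemClass.coe_one]
    exact key1
  have e2 : ((xa⁻¹ * xa⁻¹ * ya⁻¹ * xa⁻¹ * ya⁻¹ * ya⁻¹) ^ 4) ≠ 1 := by
    intro h
    apply key2
    have h' := congrArg Subtype.val h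
    simp only [SubmonoidClass.coe_pow, Subgroup.coe_mul, InvMemClass.coe_inv,
      OneMemClass.coe_one] at h'
    exact h'
  apply e2
  have : φ ((xa * xa * ya * xa * ya * ya) ^ 4)
      = (xa⁻¹ * xa⁻¹ * ya⁻¹ * xa⁻¹ * ya⁻¹ * ya⁻¹) ^ 4 := by
    simp only [map_pow, map_mul, hx, hy]
  rw [← this, e1, map_one]

/-- The alternating group `Alt(7)` is not strongly symmetric: there is a generating
pair `x, y` of `Alt(7)` such that no automorphism of `Alt(7)` inverts both `x` and
`y`. -/
theorem alt_seven_not_strongly_symmetric :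
    ¬ StronglySymmetric (alternatingGroup (Fin 7)) ∧
      ∃ x y : alternatingGroup (Fin 7), Subgroup.closure {x, y} = ⊤ ∧
        ¬∃ φ : MulAut (alternatingGroup (Fin 7)), φ x = x⁻¹ ∧ φ y = y⁻¹ := by
  constructor
  · rintro ⟨-, hall⟩
    exact no_inverting_aut (hall xa ya closure_xa_ya)
  · exact ⟨xa, ya, closure_xa_ya, no_inverting_aut⟩
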